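/- Let V be a finite-dimensional real vector space and C ⊆ V a polyhedral convex cone. Then the following are equivalent: (1) every linear functional l : V → ℝ that is nonnegative on C vanishes identically on C; (2) 0 lies in the relative interior of C. -/
import Mathlib


/-- The polyhedral convex cone generated by a finite set `s`: all nonnegative
real combinations of the elements of `s`. -/
def coneOf {V : Type*} [AddCommGroup V] [Module ℝ V] (s : Finset V) : Set V :=
  {x | ∃ f : V → ℝ, (∀ v, 0 ≤ f v) ∧ x = ∑ v ∈ s, f v • v}

section Aux

variable {V : Type*} [AddCommGroup V] [Module ℝ V]

lemma coneOf_zero_mem (s : Finset V) : (0 : V) ∈ coneOf s :=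
  ⟨0, fun _ => le_refl 0, by simp⟩

lemma coneOf_smul_mem {s : Finset V} {c : ℝ} (hc : 0 ≤ c) {x : V} (hx : x ∈ coneOf s) :
    c • x ∈ coneOf s := by
  obtain ⟨f, hf, rfl⟩ := hx
  refine ⟨fun v => c * f v, fun v => mul_nonneg hc (hf v), ?_⟩
  rw [Finset.smul_sum]
  exact Finset.sum_congr rfl fun v _ => by dsimp only; rw [smul_smul]

lemma coneOf_add_mem {s : Finset V} {x y : V} (hx : x ∈ coneOf s) (hy : y ∈ coneOf s) :
    x + y ∈ coneOf s := by
  obtain ⟨f, hf, rfl⟩ := hx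
  obtain ⟨g, hg, rfl⟩ := hy
  refine ⟨fun v => f v + g v, fun v => add_nonneg (hf v) (hg v), ?_⟩
  rw [← Finset.sum_add_distrib]
  exact Finset.sum_congr rfl fun v _ => by dsimp only; rw [add_smul]

lemma coneOf_mem_of_mem {s : Finset V} {v : V} (hv : v ∈ s) : v ∈ coneOf s := by
  classical
  refine ⟨fun w => if w = v then 1 else 0, fun w => by dsimp; split <;> norm_num, ?_⟩
  simp [ite_smul, Finset.sum_ite_eq' s v, hv]

lemma coneOf_sum_mem {s : Finset V} {ι : Type*} (t : Finset ι) (g : ι → V)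
    (h : ∀ i ∈ t, g i ∈ coneOf s) : ∑ i ∈ t, g i ∈ coneOf s :=
  Finset.sum_induction g (· ∈ coneOf s) (fun _ _ => coneOf_add_mem) (coneOf_zero_mem s) h

lemma coneOf_convex (s : Finset V) : Convex ℝ (coneOf s) :=
  fun _ hx _ hy _ _ ha hb _ => coneOf_add_mem (coneOf_smul_mem ha hx) (coneOf_smul_mem hb hy)

lemma coneOf_mono {s t : Finset V} (h : s ⊆ t) : coneOf s ⊆ coneOf t := by
  classical
  rintro x ⟨f, hf, rfl⟩
  refine ⟨fun v => if v ∈ s then f v else 0,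
    fun v => by dsimp; split; exacts [hf v, le_refl 0], ?_⟩
  rw [← Finset.sum_subset h (fun x _ hxs => by dsimp only; rw [if_neg hxs, zero_smul])]
  exact Finset.sum_congr rfl fun v hv => by dsimp only; rw [if_pos hv]

lemma coneOf_reduce [DecidableEq V] {t : Finset V} (f g : V → ℝ) (hf : ∀ v, 0 ≤ f v)
    (hg : ∑ v ∈ t, g v • v = 0) {w : V} (hw : w ∈ t) (hgw : 0 < g w) :
    ∃ w₀ ∈ t, (∑ v ∈ t, f v • v) ∈ coneOf (t.erase w₀) := by
  classical
  set T := t.filter (fun v => 0 < g v) with hT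
  have hwT : w ∈ T := Finset.mem_filter.mpr ⟨hw, hgw⟩
  have hTne : T.Nonempty := ⟨w, hwT⟩
  set r := T.inf' hTne (fun v => f v / g v) with hrdef
  obtain ⟨w₀, hw₀T, hr⟩ := Finset.exists_mem_eq_inf' hTne (fun v => f v / g v)
  have hw₀t : w₀ ∈ t := (Finset.mem_filter.mp hw₀T).1
  have hgw₀ : 0 < g w₀ := (Finset.mem_filter.mp hw₀T).2
  have hr0 : 0 ≤ r := by rw [← hrdef] at hr; rw [hr]; exact div_nonneg (hf w₀) hgw₀.le
  rw [← hrdef] at hr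
  have key : ∀ v ∈ t, r * g v ≤ f v := by
    intro v hv
    by_cases h : 0 < g v
    · have hle : r ≤ f v / g v := Finset.inf'_le _ (Finset.mem_filter.mpr ⟨hv, h⟩)
      calc r * g v ≤ (f v / g v) * g v := mul_le_mul_of_nonneg_right hle h.le
        _ = f v := div_mul_cancel₀ _ h.ne'
    · push_neg at h
      exact le_trans (mul_nonpos_of_nonneg_of_nonpos hr0 h) (hf v)
  refine ⟨w₀, hw₀t, fun v => if v ∈ t then f v - r * g v else 0, ?_, ?_⟩
  · intro v; dsimp; split
    · next h => exact sub_nonneg.mpr (key v h)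
    · exact le_refl 0
  · have hzero : (if w₀ ∈ t then f w₀ - r * g w₀ else 0) • w₀ = 0 := by
      rw [if_pos hw₀t, hr, div_mul_cancel₀ _ hgw₀.ne', sub_self, zero_smul]
    show ∑ v ∈ t, f v • v = ∑ v ∈ t.erase w₀, (if v ∈ t then f v - r * g v else 0) • v
    rw [Finset.sum_erase (f := fun v => (if v ∈ t then f v - r * g v else 0) • v) t hzero]
    have h1 : ∑ v ∈ t, (if v ∈ t then f v - r * g v else 0) • v
        = ∑ v ∈ t, (f v • v - (r * g v) • v) :=
      Finset.sum_congr rfl fun v hv => by rw [if_pos hv, sub_smul]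
    have h2 : ∑ v ∈ t, (r * g v) • v = r • ∑ v ∈ t, g v • v := by
      rw [Finset.smul_sum]
      exact Finset.sum_congr rfl fun v _ => (smul_smul r (g v) v).symm
    rw [h1, Finset.sum_sub_distrib, h2, hg, smul_zero, sub_zero]

lemma coneOf_caratheodory (t : Finset V) :
    ∀ x ∈ coneOf t, ∃ u, u ⊆ t ∧ LinearIndependent ℝ (fun i : ↥u => (i : V)) ∧ x ∈ coneOf u := by
  classical
  induction t using Finset.strongInductionOn with
  | _ t ih =>
    intro x hx
    by_cases hli : LinearIndependent ℝ (fun i : ↥t => (i : V))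
    · exact ⟨t, Finset.Subset.refl t, hli, hx⟩
    obtain ⟨g, hg, i₀, hi₀⟩ := Fintype.not_linearIndependent_iff.mp hli
    set gg : V → ℝ := fun v => if h : v ∈ t then g ⟨v, h⟩ else 0 with hggdef
    have hggeq : ∀ i : ↥t, gg ↑i = g i := fun i => dif_pos i.2
    have hggsum : ∑ v ∈ t, gg v • v = 0 := by
      rw [← Finset.sum_coe_sort t (fun v => gg v • v), ← hg]
      exact Finset.sum_congr rfl fun i _ => by rw [hggeq]
    obtain ⟨f, hf, rfl⟩ := hx
    have main : ∃ w₀ ∈ t, (∑ v ∈ t, f v • v) ∈ coneOf (t.erase w₀) := by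
      rcases lt_trichotomy (g i₀) 0 with hneg | hzero | hpos
      · refine coneOf_reduce f (fun v => -gg v) hf ?_ i₀.2 ?_
        · show ∑ v ∈ t, (-gg v) • v = 0
          simp only [neg_smul]
          rw [Finset.sum_neg_distrib, hggsum, neg_zero]
        · show (0:ℝ) < -gg ↑i₀
          rw [hggeq]
          linarith
      · exact absurd hzero hi₀
      · refine coneOf_reduce f gg hf hggsum i₀.2 ?_
        show (0:ℝ) < gg ↑i₀
        rw [hggeq]; exact hpos
    obtain ⟨w₀, hw₀, hmem⟩ := main
    obtain ⟨u, hu, hli', hxu⟩ := ih (t.erase w₀) (Finset.erase_ssubset hw₀) _ hmem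
    exact ⟨u, hu.trans (Finset.erase_subset _ _), hli', hxu⟩

end Aux

lemma isClosed_coneOf_of_linearIndependent {V : Type*} [NormedAddCommGroup V]
    [NormedSpace ℝ V] [FiniteDimensional ℝ V] {u : Finset V}
    (h : LinearIndependent ℝ (fun i : ↥u => (i : V))) : IsClosed (coneOf u) := by
  classical
  let L : (↥u → ℝ) →ₗ[ℝ] V :=
    { toFun := fun c => ∑ i : ↥u, c i • (i : V)
      map_add' := fun c d => by simp [add_smul, Finset.sum_add_distrib]
      map_smul' := fun m c => by simp [smul_smul, Finset.smul_sum] }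
  have hker : LinearMap.ker L = ⊥ := by
    rw [LinearMap.ker_eq_bot']
    intro c hc
    exact funext (Fintype.linearIndependent_iff.mp h c hc)
  have hemb := LinearMap.isClosedEmbedding_of_injective hker
  have hset : coneOf u = ⇑L '' {c | ∀ i, 0 ≤ c i} := by
    ext x
    constructor
    · rintro ⟨f, hf, rfl⟩
      exact ⟨fun i => f ↑i, fun i => hf ↑i,
        by simpa [L] using Finset.sum_coe_sort u (fun v => f v • v)⟩
    · rintro ⟨c, hc, rfl⟩
      refine ⟨fun v => if h : v ∈ u then c ⟨v, h⟩ else 0, fun v => ?_, ?_⟩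
      · dsimp; split; exacts [hc _, le_refl 0]
      · rw [← Finset.sum_coe_sort u (fun v => (if h : v ∈ u then c ⟨v, h⟩ else 0) • v)]
        exact (Finset.sum_congr rfl fun i _ => by rw [dif_pos i.2]).symm
  rw [hset]
  refine hemb.isClosedMap _ ?_
  rw [Set.setOf_forall]
  exact isClosed_iInter fun i => isClosed_le continuous_const (continuous_apply i)

lemma isClosed_coneOf {V : Type*} [NormedAddCommGroup V] [NormedSpace ℝ V]
    [FiniteDimensional ℝ V] (s : Finset V) : IsClosed (coneOf s) := by
  classical
  have hdecomp : coneOf s =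
      ⋃ u ∈ {u : Finset V | u ⊆ s ∧ LinearIndependent ℝ (fun i : ↥u => (i : V))}, coneOf u := by
    ext x
    simp only [Set.mem_iUnion, Set.mem_setOf_eq, exists_prop]
    constructor
    · intro hx
      obtain ⟨u, h1, h2, h3⟩ := coneOf_caratheodory s x hx
      exact ⟨u, ⟨h1, h2⟩, h3⟩
    · rintro ⟨u, ⟨h1, _⟩, h3⟩
      exact coneOf_mono h1 h3
  rw [hdecomp]
  refine Set.Finite.isClosed_biUnion ?_ ?_
  · exact Set.Finite.subset s.powerset.finite_toSet
      (fun u hu => Finset.mem_coe.mpr (Finset.mem_powerset.mpr hu.1))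
  · rintro u ⟨-, h2⟩
    exact isClosed_coneOf_of_linearIndependent h2

/-- For a polyhedral convex cone `C` in a finite-dimensional real
vector space, every linear functional nonnegative on `C` vanishes on `C` iff
`0` lies in the relative interior of `C`. -/
theorem forall_nonneg_functional_vanishes_iff_zero_mem_relint
    (V : Type*) [NormedAddCommGroup V] [NormedSpace ℝ V] [FiniteDimensional ℝ V]
    (s : Finset V) (C : Set V) (hC : C = coneOf s) :
    (∀ l : V →ₗ[ℝ] ℝ, (∀ x ∈ C, 0 ≤ l x) → ∀ x ∈ C, l x = 0) ↔
      (0 : V) ∈ intrinsicInterior ℝ C := by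
  classical
  subst hC
  constructor
  · intro H
    -- every generator has its negation in the cone
    have hneg : ∀ v ∈ s, -v ∈ coneOf s := by
      intro v hv
      by_contra hnot
      obtain ⟨f, u, hfu, huf⟩ :=
        geometric_hahn_banach_closed_point (coneOf_convex s) (isClosed_coneOf s) hnot
      have hu0 : (0 : ℝ) < u := by
        have h0 : f (0 : V) < u := hfu 0 (coneOf_zero_mem s)
        rwa [map_zero] at h0
      have hfle : ∀ b ∈ coneOf s, f b ≤ 0 := by
        intro b hb
        by_contra hpos
        push_neg at hpos
        have ht : (0 : ℝ) ≤ (|u| + 1) / f b := div_nonneg (by positivity) hpos.le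
        have hlt := hfu _ (coneOf_smul_mem ht hb)
        rw [map_smul, smul_eq_mul, div_mul_cancel₀ _ hpos.ne'] at hlt
        linarith [le_abs_self u]
      have hl := H (-(f.toLinearMap))
        (fun x hx => by
          simp only [LinearMap.neg_apply, ContinuousLinearMap.coe_coe, Left.nonneg_neg_iff]
          exact hfle x hx)
        v (coneOf_mem_of_mem hv)
      have hfv : f v = 0 := by
        simpa [neg_eq_zero] using hl
      rw [map_neg, hfv, neg_zero] at huf
      linarith
    have hnegmem : ∀ x ∈ coneOf s, -x ∈ coneOf s := by
      rintro x ⟨f, hf, rfl⟩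
      have hrw : -(∑ v ∈ s, f v • v) = ∑ v ∈ s, f v • (-v) := by
        rw [← Finset.sum_neg_distrib]
        exact Finset.sum_congr rfl fun v _ => (smul_neg _ _).symm
      rw [hrw]
      exact coneOf_sum_mem s _ (fun v hv => coneOf_smul_mem (hf v) (hneg v hv))
    -- the cone equals the linear span of s
    have hspan : (Submodule.span ℝ (s : Set V) : Set V) ⊆ coneOf s := by
      intro x hx
      induction hx using Submodule.span_induction with
      | mem y hy => exact coneOf_mem_of_mem hy
      | zero => exact coneOf_zero_mem s
      | add y z _ _ hy hz => exact coneOf_add_mem hy hz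
      | smul a y _ hy =>
        rcases le_or_gt 0 a with ha | ha
        · exact coneOf_smul_mem ha hy
        · have : a • y = (-a) • (-y) := by simp
          rw [this]
          exact coneOf_smul_mem (by linarith) (hnegmem y hy)
    have hsub : coneOf s ⊆ (Submodule.span ℝ (s : Set V) : Set V) := by
      rintro x ⟨f, hf, rfl⟩
      exact Submodule.sum_mem _ (fun v hv => Submodule.smul_mem _ _ (Submodule.subset_span hv))
    -- conclude 0 is in the intrinsic interior
    rw [mem_intrinsicInterior]
    refine ⟨⟨0, subset_affineSpan ℝ _ (coneOf_zero_mem s)⟩, ?_, rfl⟩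
    have hspanle : affineSpan ℝ (coneOf s) ≤ (Submodule.span ℝ (s : Set V)).toAffineSubspace := by
      rw [affineSpan_le]
      intro z hz
      exact Submodule.mem_toAffineSubspace.mpr (hsub hz)
    have huniv : ((↑) ⁻¹' coneOf s : Set (affineSpan ℝ (coneOf s))) = Set.univ := by
      apply Set.eq_univ_of_forall
      intro y
      show (y : V) ∈ coneOf s
      exact hspan (Submodule.mem_toAffineSubspace.mp (hspanle y.2))
    rw [huniv, interior_univ]
    trivial
  · intro h0 l hl x hx
    obtain ⟨y, hy, hy0⟩ := mem_intrinsicInterior.mp h0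
    have hxline : ∀ t : ℝ, t • x ∈ affineSpan ℝ (coneOf s) := by
      intro t
      have h1 : x ∈ affineSpan ℝ (coneOf s) := subset_affineSpan ℝ _ hx
      have h2 : (0 : V) ∈ affineSpan ℝ (coneOf s) :=
        subset_affineSpan ℝ _ (coneOf_zero_mem s)
      have := AffineSubspace.smul_vsub_vadd_mem (affineSpan ℝ (coneOf s)) t h1 h2 h2
      simpa using this
    let γ : ℝ → affineSpan ℝ (coneOf s) := fun t => ⟨t • x, hxline t⟩
    have hγ : Continuous γ :=
      Continuous.subtype_mk (continuous_id.smul continuous_const) _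
    have hopen : IsOpen (γ ⁻¹' interior ((↑) ⁻¹' coneOf s)) := isOpen_interior.preimage hγ
    have h0mem : (0 : ℝ) ∈ γ ⁻¹' interior ((↑) ⁻¹' coneOf s) := by
      have hγ0 : γ 0 = y := Subtype.ext (by simp [γ, hy0])
      show γ 0 ∈ interior ((↑) ⁻¹' coneOf s)
      rw [hγ0]; exact hy
    obtain ⟨ε, hε, hball⟩ := Metric.isOpen_iff.mp hopen 0 h0mem
    have hmem : γ (-(ε / 2)) ∈ interior ((↑) ⁻¹' coneOf s) := by
      apply hball
      rw [Metric.mem_ball, Real.dist_eq]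
      rw [sub_zero, abs_neg, abs_of_pos (by linarith)]
      linarith
    have hCmem : (-(ε / 2)) • x ∈ coneOf s := by
      have h' := interior_subset hmem
      exact h'
    have h1 : 0 ≤ l ((-(ε / 2)) • x) := hl _ hCmem
    rw [map_smul, smul_eq_mul] at h1
    have h2 : 0 ≤ l x := hl x hx
    nlinarith
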